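/- arXiv:1909.02769 — 6 statements merged into one kernel-verified Lean document; each statement's English description precedes it below -/
import Mathlib

section
/- For any policies $\pi,\pi'$ on a finite discounted regularized MDP, $\langle q_\lambda^{\pi} + \lambda\nabla\omega(\pi),\, \pi' - \pi\rangle = T_\lambda^{\pi'} v_\lambda^{\pi} - v_\lambda^{\pi} - \lambda B_\omega(\pi' ,\pi)$, where for each state $s$ the left side is $\sum_a (q_\lambda^{\pi}(s,a)+\lambda\,\partial_{\pi(a\mid s)}\omega(\pi(\cdot\mid s)))\,(\pi'(a\mid s)-\pi(a\mid s))$ and $B_\omega(\pi',\pi)(s)$ is the Bregman distance of $\omega$ between $\pi'(\cdot\mid s)$ and $\pi(\cdot\mid s)$. -/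
open Finset

/-- Connection between the regularized Bellman operator and the q-function:
`⟨q_λ^π + λ∇ω(π), π' - π⟩ = T_λ^{π'} v_λ^π - v_λ^π - λ B_ω(π',π)`, statewise. -/
theorem bellman_q_function_identity
    (S A : Type*) [Fintype S] [Fintype A]
    (γ lam : ℝ) (hγ0 : 0 < γ) (hγ1 : γ < 1) (hlam : 0 ≤ lam)
    (p : S → A → S → ℝ) (hp0 : ∀ s a s', 0 ≤ p s a s')
    (hp1 : ∀ s a, ∑ s', p s a s' = 1)
    (c : S → A → ℝ) (ω : (A → ℝ) → ℝ) (Dω : (A → ℝ) → A → ℝ)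
    (π π' : S → A → ℝ)
    (hπ : ∀ s, π s ∈ stdSimplex ℝ A) (hπ' : ∀ s, π' s ∈ stdSimplex ℝ A)
    (v : S → ℝ)
    (hv : ∀ s, v s = (∑ a, π s a * c s a) + lam * ω (π s)
        + γ * ∑ a, π s a * ∑ s', p s a s' * v s')
    (q : S → A → ℝ)
    (hq : ∀ s a, q s a = c s a + lam * ω (π s) + γ * ∑ s', p s a s' * v s') :
    ∀ s, (∑ a, (q s a + lam * Dω (π s) a) * (π' s a - π s a))
      = ((∑ a, π' s a * c s a) + lam * ω (π' s)
          + γ * ∑ a, π' s a * ∑ s', p s a s' * v s') - v s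
        - lam * (ω (π' s) - ω (π s) - ∑ a, Dω (π s) a * (π' s a - π s a)) := by
  intro s
  have h1 : ∑ a, π s a = 1 := (hπ s).2
  have h2 : ∑ a, π' s a = 1 := (hπ' s).2
  have hvs := hv s
  set g : A → ℝ := fun a => ∑ s', p s a s' * v s' with hg
  simp only [hq, ← hg]
  have expand : (∑ a, (c s a + lam * ω (π s) + γ * g a
      + lam * Dω (π s) a) * (π' s a - π s a))
    = (∑ a, π' s a * c s a) - (∑ a, π s a * c s a)
      + lam * ω (π s) * ((∑ a, π' s a) - (∑ a, π s a))
      + γ * ((∑ a, π' s a * g a) - (∑ a, π s a * g a))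
      + lam * (∑ a, Dω (π s) a * (π' s a - π s a)) := by
    simp only [Finset.mul_sum, ← Finset.sum_sub_distrib, ← Finset.sum_add_distrib]
    exact Finset.sum_congr rfl fun a _ => by ring
  rw [expand, h1, h2, hvs]
  ring
end

section
/- (Linear approximation of a policy's value.) For policies $\pi,\pi'\in(\Delta_A)^S$ on a finite discounted regularized MDP, the directional derivative of the value satisfies $\langle \nabla_\pi v_\lambda^{\pi},\, \pi'-\pi\rangle = (I-\gamma P^{\pi})^{-1}\bigl(T_\lambda^{\pi'} v_\lambda^{\pi} - v_\lambda^{\pi} - \lambda B_\omega(\pi',\pi)\bigr)$, as an identity of vectors in $\mathbb{R}^S$. -/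
open Finset Matrix

attribute [local instance] Matrix.linftyOpNormedAddCommGroup Matrix.linftyOpNormedRing
  Matrix.linftyOpNormedAlgebra

/-- The value of a (possibly extended) policy `y`, defined via the matrix-inverse formula
`v(y) = (I - γ P^y)⁻¹ c^y_λ`. -/
noncomputable def Vext {S A : Type*} [Fintype S] [Fintype A] [DecidableEq S]
    (γ lam : ℝ) (p : S → A → S → ℝ) (c : S → A → ℝ) (ω : (A → ℝ) → ℝ)
    (y : S → A → ℝ) : S → ℝ :=
  ((1 : Matrix S S ℝ) - γ • Matrix.of fun s s' => ∑ a, y s a * p s a s')⁻¹ *ᵥ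
    fun s => ∑ a, y s a * (c s a + lam * ω (y s))

/-- Linear approximation of a policy's value: the directional derivative of `v_λ^π` in the
direction `π' - π` equals `(I - γ P^π)⁻¹ (T_λ^{π'} v_λ^π - v_λ^π - λ B_ω(π',π))`. -/
theorem linear_approximation_of_value
    (S A : Type*) [Fintype S] [Fintype A] [DecidableEq S]
    (γ lam : ℝ) (hγ0 : 0 < γ) (hγ1 : γ < 1) (hlam : 0 ≤ lam)
    (p : S → A → S → ℝ) (hp0 : ∀ s a s', 0 ≤ p s a s')
    (hp1 : ∀ s a, ∑ s', p s a s' = 1)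
    (c : S → A → ℝ) (ω : (A → ℝ) → ℝ) (Dω : (A → ℝ) → A → ℝ)
    (hω : ∀ x : A → ℝ,
      HasFDerivAt ω (∑ a, Dω x a • (ContinuousLinearMap.proj a : (A → ℝ) →L[ℝ] ℝ)) x)
    (hωconv : ConvexOn ℝ (stdSimplex ℝ A) ω)
    (π π' : S → A → ℝ)
    (hπ : ∀ s, π s ∈ stdSimplex ℝ A) (hπ' : ∀ s, π' s ∈ stdSimplex ℝ A)
    (P : Matrix S S ℝ) (hP : ∀ s s', P s s' = ∑ a, π s a * p s a s')
    (hdet : IsUnit (1 - γ • P).det)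
    (v : S → ℝ) (hv : v = Vext γ lam p c ω π)
    (B : S → ℝ)
    (hB : ∀ s, B s = ω (π' s) - ω (π s) - ∑ a, Dω (π s) a * (π' s a - π s a))
    (Tv : S → ℝ)
    (hTv : ∀ s, Tv s = (∑ a, π' s a * c s a) + lam * ω (π' s)
        + γ * ∑ a, π' s a * ∑ s', p s a s' * v s') :
    ∀ s, HasDerivAt
        (fun t : ℝ => Vext γ lam p c ω (fun s' a => π s' a + t * (π' s' a - π s' a)) s)
        (((1 - γ • P)⁻¹ *ᵥ fun s' => Tv s' - v s' - lam * B s') s) 0 := by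
  classical
  intro s₀
  set d : S → A → ℝ := fun s a => π' s a - π s a with hd
  have hsumπ : ∀ s, ∑ a, π s a = 1 := fun s => (hπ s).2
  have hsumd : ∀ s, ∑ a, d s a = 0 := by
    intro s
    simp [hd, Finset.sum_sub_distrib, hsumπ s, (hπ' s).2]
  set Q : Matrix S S ℝ := Matrix.of (fun s s' => ∑ a, d s a * p s a s') with hQ
  set F : ℝ → Matrix S S ℝ := fun t =>
    (1 : Matrix S S ℝ) - γ • Matrix.of fun s s' => ∑ a, (π s a + t * d s a) * p s a s' with hF
  set g : ℝ → S → ℝ := fun t s =>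
    ∑ a, (π s a + t * d s a) * (c s a + lam * ω fun b => π s b + t * d s b) with hg
  set W : ℝ → Matrix S S ℝ := fun t => Ring.inverse (F t) with hW
  have hF0 : F 0 = 1 - γ • P := by
    ext s s'
    simp [hF, hP]
  have hW0 : W 0 = (F 0)⁻¹ := (Matrix.nonsing_inv_eq_ringInverse _).symm
  have hVeq : ∀ t, Vext γ lam p c ω (fun s' a => π s' a + t * d s' a) = W t *ᵥ g t := by
    intro t
    have h1 : Vext γ lam p c ω (fun s' a => π s' a + t * d s' a) = (F t)⁻¹ *ᵥ g t := rfl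
    rw [h1, Matrix.nonsing_inv_eq_ringInverse]
  have hfun : (fun t : ℝ => Vext γ lam p c ω (fun s' a => π s' a + t * d s' a) s₀)
      = fun t => (W t *ᵥ g t) s₀ := by
    funext t; rw [hVeq t]
  rw [hfun]
  -- derivative of F
  set N : Matrix S S ℝ := -(γ • Q) with hNdef
  have hFaff : F = fun t => F 0 + t • N := by
    funext t
    ext s s'
    simp only [hF, hNdef, hQ, Matrix.sub_apply, Matrix.add_apply, Matrix.smul_apply,
      Matrix.neg_apply, Matrix.of_apply, smul_eq_mul, add_mul, Finset.sum_add_distrib,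
      zero_mul, add_zero, mul_assoc, ← Finset.mul_sum]
    ring
  have hN : HasDerivAt F N 0 := by
    rw [hFaff]
    exact (((hasDerivAt_id (0 : ℝ)).smul_const N).const_add (F 0)).congr_deriv (one_smul _ _)
  have hunit : IsUnit (F 0) := by
    rw [hF0]; exact (Matrix.isUnit_iff_isUnit_det _).2 hdet
  obtain ⟨u, hu⟩ := hunit
  have huinv : (↑u⁻¹ : Matrix S S ℝ) = (F 0)⁻¹ := by
    rw [Matrix.nonsing_inv_eq_ringInverse, ← hu, Ring.inverse_unit]
  set W' : Matrix S S ℝ := γ • ((F 0)⁻¹ * Q * (F 0)⁻¹) with hW'def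
  have hWd : HasDerivAt W W' 0 := by
    have h1 : HasFDerivAt (Ring.inverse : Matrix S S ℝ → Matrix S S ℝ)
        (-(ContinuousLinearMap.mulLeftRight ℝ (Matrix S S ℝ) ↑u⁻¹ ↑u⁻¹)) (F 0) :=
      hu ▸ hasFDerivAt_ringInverse u
    have h2 := h1.comp_hasDerivAt 0 hN
    have h3 : (-(ContinuousLinearMap.mulLeftRight ℝ (Matrix S S ℝ) ↑u⁻¹ ↑u⁻¹)) N = W' := by
      simp only [hW'def, hNdef, ContinuousLinearMap.neg_apply,
        ContinuousLinearMap.mulLeftRight_apply, huinv]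
      rw [mul_neg, neg_mul, neg_neg, Matrix.mul_smul, Matrix.smul_mul]
    rw [h3] at h2
    exact h2
  have hWentry : ∀ i j, HasDerivAt (fun t => W t i j) (W' i j) 0 := by
    intro i j
    let E : Matrix S S ℝ →ₗ[ℝ] ℝ :=
      { toFun := fun M => M i j, map_add' := fun _ _ => rfl, map_smul' := fun _ _ => rfl }
    have h1 := (LinearMap.toContinuousLinearMap E).hasFDerivAt.comp_hasDerivAt 0 hWd
    exact h1
  -- derivative of g
  set g' : S → ℝ := fun s => (∑ a, d s a * c s a) + lam * ∑ b, Dω (π s) b * d s b with hg'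
  have hgd : ∀ s, HasDerivAt (fun t => g t s) (g' s) 0 := by
    intro s
    have hcurve : HasDerivAt (fun t : ℝ => fun b => π s b + t * d s b) (d s) 0 := by
      rw [hasDerivAt_pi]
      intro b
      simpa using ((hasDerivAt_id (0 : ℝ)).mul_const (d s b)).const_add (π s b)
    have hω0 : HasDerivAt (fun t : ℝ => ω fun b => π s b + t * d s b)
        (∑ b, Dω (π s) b * d s b) 0 := by
      have hπ0 : (fun b => π s b + (0 : ℝ) * d s b) = π s := by funext b; simp
      have h1 : HasFDerivAt ω
          (∑ a, Dω (π s) a • (ContinuousLinearMap.proj a : (A → ℝ) →L[ℝ] ℝ))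
          (fun b => π s b + (0 : ℝ) * d s b) := by rw [hπ0]; exact hω (π s)
      have h2 := h1.comp_hasDerivAt 0 hcurve
      simp [ContinuousLinearMap.sum_apply, Function.comp] at h2
      exact h2
    have hprod : ∀ a : A, HasDerivAt
        (fun t => (π s a + t * d s a) * (c s a + lam * ω fun b => π s b + t * d s b))
        (d s a * (c s a + lam * ω (π s)) + π s a * (lam * ∑ b, Dω (π s) b * d s b)) 0 := by
      intro a
      have h1 : HasDerivAt (fun t : ℝ => π s a + t * d s a) (d s a) 0 := by
        simpa using ((hasDerivAt_id (0 : ℝ)).mul_const (d s a)).const_add (π s a)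
      have h2 : HasDerivAt (fun t : ℝ => c s a + lam * ω fun b => π s b + t * d s b)
          (lam * ∑ b, Dω (π s) b * d s b) 0 := (hω0.const_mul lam).const_add (c s a)
      have h3 := h1.fun_mul h2
      exact h3.congr_deriv (by simp)
    have hsum := HasDerivAt.fun_sum (u := Finset.univ) (fun a _ => hprod a)
    have hval : ∑ a, (d s a * (c s a + lam * ω (π s)) + π s a * (lam * ∑ b, Dω (π s) b * d s b))
        = g' s := by
      have e1 : ∑ a, d s a * (c s a + lam * ω (π s)) = ∑ a, d s a * c s a := by
        simp [mul_add, Finset.sum_add_distrib, ← Finset.sum_mul, hsumd s]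
      have e2 : ∑ a, π s a * (lam * ∑ b, Dω (π s) b * d s b)
          = lam * ∑ b, Dω (π s) b * d s b := by
        rw [← Finset.sum_mul, hsumπ s, one_mul]
      rw [Finset.sum_add_distrib, e1, e2, hg']
    rw [← hval]
    exact hsum
  -- assemble entrywise derivative of the value
  have hmain : HasDerivAt (fun t => (W t *ᵥ g t) s₀)
      (∑ s', (W' s₀ s' * g 0 s' + W 0 s₀ s' * g' s')) 0 := by
    have h := HasDerivAt.fun_sum (u := Finset.univ)
      (fun s' (_ : s' ∈ Finset.univ) => (hWentry s₀ s').mul (hgd s'))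
    simpa [Matrix.mulVec, dotProduct] using h
  -- compute the value of the derivative
  have hg0 : g 0 = fun s => ∑ a, π s a * (c s a + lam * ω (π s)) := by
    funext s; simp [hg]
  have hPof : (Matrix.of fun s s' => ∑ a, π s a * p s a s') = P := by
    ext s s'; simp [hP]
  have hvM : v = (F 0)⁻¹ *ᵥ g 0 := by
    rw [hv, hF0, hg0]
    unfold Vext
    rw [hPof]
  have hvfix : ∀ s, v s = g 0 s + γ * ∑ s', P s s' * v s' := by
    have h1 : (1 - γ • P) *ᵥ v = g 0 := by
      rw [hvM, ← hF0, Matrix.mulVec_mulVec, Matrix.mul_nonsing_inv _ (by rwa [hF0]),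
        Matrix.one_mulVec]
    rw [Matrix.sub_mulVec, Matrix.smul_mulVec, Matrix.one_mulVec] at h1
    intro s
    have h2 := congrFun h1 s
    have h3 : v s - γ * ∑ s', P s s' * v s' = g 0 s := by
      simpa [Matrix.mulVec, dotProduct, Finset.mul_sum] using h2
    linarith
  have hswap : ∀ (s : S) (w : S → A → ℝ),
      ∑ s', (∑ a, w s a * p s a s') * v s' = ∑ a, w s a * ∑ s', p s a s' * v s' := by
    intro s w
    calc ∑ s', (∑ a, w s a * p s a s') * v s'
        = ∑ s', ∑ a, w s a * (p s a s' * v s') := by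
          refine Finset.sum_congr rfl fun s' _ => ?_
          rw [Finset.sum_mul]
          exact Finset.sum_congr rfl fun a _ => by ring
      _ = ∑ a, ∑ s', w s a * (p s a s' * v s') := Finset.sum_comm
      _ = ∑ a, w s a * ∑ s', p s a s' * v s' :=
          Finset.sum_congr rfl fun a _ => (Finset.mul_sum _ _ _).symm
  have hkey : ∀ s, Tv s - v s - lam * B s = γ * (∑ s', Q s s' * v s') + g' s := by
    intro s
    have hQv : ∑ s', Q s s' * v s' = ∑ a, d s a * ∑ s', p s a s' * v s' := by
      simp only [hQ, Matrix.of_apply]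
      exact hswap s d
    have hPv : ∑ s', P s s' * v s' = ∑ a, π s a * ∑ s', p s a s' * v s' := by
      simp only [hP]
      exact hswap s π
    have hg0s : g 0 s = ∑ a, π s a * (c s a + lam * ω (π s)) := congrFun hg0 s
    rw [hTv, hB, hvfix s, hg0s, hQv, hPv, hg']
    simp only [hd, sub_mul, mul_add, Finset.sum_sub_distrib, Finset.sum_add_distrib,
      ← Finset.sum_mul, hsumπ s, one_mul, mul_sub]
    ring
  have hvec : (fun s' => Tv s' - v s' - lam * B s') = γ • (Q *ᵥ v) + g' := by
    funext s'
    rw [hkey s']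
    simp [Matrix.mulVec, dotProduct]
  have hval : ((1 - γ • P)⁻¹ *ᵥ fun s' => Tv s' - v s' - lam * B s') s₀
      = ∑ s', (W' s₀ s' * g 0 s' + W 0 s₀ s' * g' s') := by
    rw [← hF0, hvec, hW0]
    have h1 : ∑ s', (W' s₀ s' * g 0 s' + (F 0)⁻¹ s₀ s' * g' s')
        = (W' *ᵥ g 0) s₀ + ((F 0)⁻¹ *ᵥ g') s₀ := by
      rw [Finset.sum_add_distrib]
      rfl
    rw [h1]
    have h2 : W' *ᵥ g 0 = γ • ((F 0)⁻¹ *ᵥ (Q *ᵥ v)) := by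
      rw [hW'def, Matrix.smul_mulVec, ← Matrix.mulVec_mulVec, ← Matrix.mulVec_mulVec,
        ← hvM]
    rw [h2, Matrix.mulVec_add, Matrix.mulVec_smul]
    rfl
  rw [hval]
  exact hmain
end

section
/- (Policy gradient theorem for regularized MDPs, tabular case.) For a policy $\pi\in(\Delta_A)^S$, the partial derivative of the regularized value with respect to the tabular parameter $\pi(\bar a\mid \bar s)$ is $\partial_{\pi(\bar a\mid \bar s)} v_\lambda^{\pi}(s) = \sum_{t=0}^{\infty}\gamma^t\, p^{\pi}(s_t=\bar s \mid s_0 = s)\,\bigl(\lambda\, \partial_{\pi(\bar a\mid\bar s)}\omega(\pi(\cdot\mid\bar s)) + q_\lambda^{\pi}(\bar s,\bar a)\bigr)$, equivalently $\nabla_{\pi(\cdot\mid\bar s)} v_\lambda^{\pi}(s) = [(I-\gamma P^{\pi})^{-1}]_{s,\bar s}\,(\lambda\nabla\omega(\pi(\cdot\mid\bar s)) + q_\lambda^{\pi}(\bar s,\cdot))$. -/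
open Finset Matrix

attribute [local instance] Matrix.linftyOpNormedAddCommGroup Matrix.linftyOpNormedSpace
  Matrix.linftyOpNormedRing Matrix.linftyOpNormedAlgebra

section Aux
variable {S : Type*} [Fintype S] [DecidableEq S]

/-- Evaluation of a matrix entry, as a continuous linear map. -/
noncomputable def entryCLM (s s' : S) : Matrix S S ℝ →L[ℝ] ℝ :=
  LinearMap.toContinuousLinearMap
    { toFun := fun M => M s s'
      map_add' := fun _ _ => rfl
      map_smul' := fun _ _ => rfl }

@[simp] lemma entryCLM_apply (s s' : S) (M : Matrix S S ℝ) : entryCLM s s' M = M s s' := rfl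

lemma of_neg_eq (f : S → S → ℝ) : (Matrix.of (-f) : Matrix S S ℝ) = -Matrix.of f := rfl

lemma norm_le_one_of_stochastic {P : Matrix S S ℝ} (h0 : ∀ s s', 0 ≤ P s s')
    (h1 : ∀ s, ∑ s', P s s' = 1) : ‖P‖ ≤ 1 := by
  have h : ‖P‖₊ ≤ 1 := by
    rw [Matrix.linfty_opNNNorm_def]
    refine Finset.sup_le fun i _ => ?_
    have : ((∑ j, ‖P i j‖₊ : NNReal) : ℝ) = 1 := by
      push_cast
      rw [← h1 i]
      exact Finset.sum_congr rfl fun j _ => by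
        simp [Real.norm_eq_abs, abs_of_nonneg (h0 i j)]
    exact le_of_eq (NNReal.coe_injective (by simpa using this))
  exact h
end Aux

/-- Policy gradient theorem for regularized MDPs (tabular case):
`∂_{π(ā|s̄)} v_λ^π(s) = ∑_t γ^t p^π(s_t = s̄ | s_0 = s) (λ ∂_{π(ā|s̄)} ω(π(·|s̄)) + q_λ^π(s̄,ā))`,
equivalently with `[(I-γP^π)⁻¹]_{s,s̄}` in place of the series. -/
theorem policy_gradient_regularized
    (S A : Type*) [Fintype S] [Fintype A] [DecidableEq S] [DecidableEq A]
    (γ lam : ℝ) (hγ0 : 0 < γ) (hγ1 : γ < 1) (hlam : 0 ≤ lam)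
    (p : S → A → S → ℝ) (hp0 : ∀ s a s', 0 ≤ p s a s')
    (hp1 : ∀ s a, ∑ s', p s a s' = 1)
    (c : S → A → ℝ) (ω : (A → ℝ) → ℝ) (Dω : (A → ℝ) → A → ℝ)
    (hω : ∀ x : A → ℝ,
      HasFDerivAt ω (∑ a, Dω x a • (ContinuousLinearMap.proj a : (A → ℝ) →L[ℝ] ℝ)) x)
    (π : S → A → ℝ) (hπ : ∀ s, π s ∈ stdSimplex ℝ A)
    (P : Matrix S S ℝ) (hP : ∀ s s', P s s' = ∑ a, π s a * p s a s')
    (hdet : IsUnit (1 - γ • P).det)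
    (v : S → ℝ) (hv : v = Vext γ lam p c ω π)
    (q : S → A → ℝ)
    (hq : ∀ s a, q s a = c s a + lam * ω (π s) + γ * ∑ s', p s a s' * v s')
    (sbar : S) (abar : A) :
    ∀ s, HasDerivAt
        (fun t : ℝ => Vext γ lam p c ω
          (fun s' a => π s' a + t * (if s' = sbar ∧ a = abar then (1 : ℝ) else 0)) s)
        ((∑' n : ℕ, γ ^ n * (P ^ n) s sbar) * (lam * Dω (π sbar) abar + q sbar abar)) 0
      ∧ (∑' n : ℕ, γ ^ n * (P ^ n) s sbar) * (lam * Dω (π sbar) abar + q sbar abar)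
          = (1 - γ • P)⁻¹ s sbar * (lam * Dω (π sbar) abar + q sbar abar) := by
  classical
  intro s
  have hne : Nonempty S := ⟨s⟩
  have hπ0 : ∀ s a, 0 ≤ π s a := fun s => (hπ s).1
  have hπ1 : ∀ s, ∑ a, π s a = 1 := fun s => (hπ s).2
  have hP0 : ∀ s1 s2, 0 ≤ P s1 s2 := fun s1 s2 => by
    rw [hP]; exact Finset.sum_nonneg fun a _ => mul_nonneg (hπ0 s1 a) (hp0 s1 a s2)
  have hProw : ∀ s1, ∑ s2, P s1 s2 = 1 := by
    intro s1
    simp_rw [hP]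
    rw [Finset.sum_comm]
    simp_rw [← Finset.mul_sum, hp1, mul_one]
    exact hπ1 s1
  have hPnorm : ‖γ • P‖ < 1 := by
    rw [norm_smul]
    calc ‖γ‖ * ‖P‖ ≤ ‖γ‖ * 1 := by
          gcongr
          exact norm_le_one_of_stochastic hP0 hProw
      _ = γ := by rw [mul_one, Real.norm_eq_abs, abs_of_pos hγ0]
      _ < 1 := hγ1
  have hsum : Summable fun n : ℕ => (γ • P) ^ n := summable_geometric_of_norm_lt_one hPnorm
  have heq : (∑' n : ℕ, γ ^ n * (P ^ n) s sbar) = (1 - γ • P)⁻¹ s sbar := by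
    rw [Matrix.nonsing_inv_eq_ringInverse, ← geom_series_eq_inverse _ hPnorm]
    have hmap := (entryCLM s sbar).map_tsum hsum
    simp only [entryCLM_apply] at hmap
    refine Eq.trans ?_ hmap.symm
    exact tsum_congr fun n => by rw [smul_pow]; simp [Matrix.smul_apply]
  refine ⟨?_, by rw [heq]⟩
  rw [heq]
  -- the derivative statement, with `(1 - γ•P)⁻¹ s sbar` as coefficient
  -- notation
  have hδsum : ∀ s1 s2, (∑ a, (if s1 = sbar ∧ a = abar then (1:ℝ) else 0) * p s1 a s2)
      = if s1 = sbar then p sbar abar s2 else 0 := by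
    intro s1 s2
    by_cases h : s1 = sbar
    · subst h
      simp [ite_mul, Finset.sum_ite_eq']
    · simp [h]
  have hAaff : ∀ t : ℝ,
      (1 : Matrix S S ℝ) - γ • Matrix.of (fun s1 s2 =>
          ∑ a, (π s1 a + t * (if s1 = sbar ∧ a = abar then (1:ℝ) else 0)) * p s1 a s2)
        = (1 - γ • P) - t • (γ • Matrix.of fun s1 s2 =>
            if s1 = sbar then p sbar abar s2 else 0) := by
    intro t
    ext s1 s2
    simp only [Matrix.sub_apply, Matrix.smul_apply, Matrix.of_apply, smul_eq_mul, hP]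
    rw [Finset.sum_congr rfl (fun a _ =>
      add_mul (π s1 a) (t * (if s1 = sbar ∧ a = abar then (1:ℝ) else 0)) (p s1 a s2)),
      Finset.sum_add_distrib]
    simp_rw [mul_assoc t]
    rw [← Finset.mul_sum, hδsum]
    ring
  have hU : IsUnit ((1 : Matrix S S ℝ) - γ • P) :=
    (Matrix.isUnit_iff_isUnit_det _).mpr hdet
  obtain ⟨u, hu⟩ := hU
  have hAderiv : HasDerivAt (fun t : ℝ => (1 - γ • P) - t • (γ • Matrix.of fun s1 s2 =>
      if s1 = sbar then p sbar abar s2 else 0))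
      (-(γ • Matrix.of fun s1 s2 => if s1 = sbar then p sbar abar s2 else 0)) 0 := by
    have h := ((hasDerivAt_id (0 : ℝ)).smul_const
      (γ • Matrix.of fun s1 s2 => if s1 = sbar then p sbar abar s2 else 0)).const_sub
      ((1 : Matrix S S ℝ) - γ • P)
    simp at h; exact h
  have hinv : HasDerivAt (fun t : ℝ => Ring.inverse ((1 - γ • P) - t • (γ • Matrix.of fun s1 s2 =>
        if s1 = sbar then p sbar abar s2 else 0)))
      ((1 - γ • P)⁻¹ * (γ • Matrix.of fun s1 s2 => if s1 = sbar then p sbar abar s2 else 0)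
        * (1 - γ • P)⁻¹) 0 := by
    have hf := hasFDerivAt_ringInverse (𝕜 := ℝ) u
    have h0 : ((1 : Matrix S S ℝ) - γ • P) - (0 : ℝ) • (γ • Matrix.of fun s1 s2 =>
        if s1 = sbar then p sbar abar s2 else 0) = (u : Matrix S S ℝ) := by simp [hu]
    rw [← h0] at hf
    have hui : (↑u⁻¹ : Matrix S S ℝ) = (1 - γ • P)⁻¹ := by
      rw [Matrix.coe_units_inv, hu]
    have := hf.comp_hasDerivAt 0 hAderiv
    simp [Function.comp_def, ContinuousLinearMap.mulLeftRight_apply, hui, mul_assoc,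
      ← Matrix.neg_of, mul_neg, neg_mul, neg_neg] at this ⊢
    exact this
  have hinvEntry : ∀ s2, HasDerivAt (fun t : ℝ =>
      Ring.inverse ((1 - γ • P) - t • (γ • Matrix.of fun s1 s2 =>
        if s1 = sbar then p sbar abar s2 else 0)) s s2)
      (((1 - γ • P)⁻¹ * (γ • Matrix.of fun s1 s2 => if s1 = sbar then p sbar abar s2 else 0)
        * (1 - γ • P)⁻¹) s s2) 0 := by
    intro s2
    have := (entryCLM s s2).hasFDerivAt.comp_hasDerivAt 0 hinv
    simp [Function.comp_def] at this; exact this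
  -- derivative of the cost vector
  have hbderiv : ∀ s2 : S, HasDerivAt (fun t : ℝ =>
      ∑ a, (π s2 a + t * (if s2 = sbar ∧ a = abar then (1:ℝ) else 0)) *
        (c s2 a + lam * ω (fun a' => π s2 a' + t * (if s2 = sbar ∧ a' = abar then (1:ℝ) else 0))))
      (if s2 = sbar then c sbar abar + lam * ω (π sbar) + lam * Dω (π sbar) abar else 0) 0 := by
    intro s2
    by_cases h : s2 = sbar
    · subst h
      rw [if_pos rfl]
      simp only [true_and]
      have hφ : HasDerivAt (fun t : ℝ => fun a' : A =>
          π s2 a' + t * (if a' = abar then (1:ℝ) else 0))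
          (fun a' => if a' = abar then (1:ℝ) else 0) 0 := by
        rw [hasDerivAt_pi]
        intro a'
        simpa using (hasDerivAt_mul_const (if a' = abar then (1:ℝ) else 0)).const_add (π s2 a')
      have hg : HasDerivAt (fun t : ℝ => ω (fun a' : A =>
          π s2 a' + t * (if a' = abar then (1:ℝ) else 0))) (Dω (π s2) abar) 0 := by
        have hcomp := (hω (fun a' : A => π s2 a' + (0:ℝ) *
            (if a' = abar then (1:ℝ) else 0))).comp_hasDerivAt 0 hφ
        simpa [Function.comp_def, mul_ite, mul_one, mul_zero,
          ContinuousLinearMap.proj_apply, Finset.sum_ite_eq'] using hcomp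
      have hterm : ∀ a : A, HasDerivAt (fun t : ℝ =>
          (π s2 a + t * (if a = abar then (1:ℝ) else 0)) *
            (c s2 a + lam * ω (fun a' : A => π s2 a' + t * (if a' = abar then (1:ℝ) else 0))))
          ((if a = abar then (1:ℝ) else 0) * (c s2 a + lam * ω (π s2))
            + π s2 a * (lam * Dω (π s2) abar)) 0 := by
        intro a
        have h1 : HasDerivAt (fun t : ℝ => π s2 a + t * (if a = abar then (1:ℝ) else 0))
            (if a = abar then (1:ℝ) else 0) 0 := by
          simpa using (hasDerivAt_mul_const (if a = abar then (1:ℝ) else 0)).const_add (π s2 a)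
        have h2 := (hg.const_mul lam).const_add (c s2 a)
        have := h1.mul h2
        simp only [zero_mul, add_zero] at this
        exact this
      have hsum2 := HasDerivAt.fun_sum (fun a (_ : a ∈ Finset.univ) => hterm a)
      refine hsum2.congr_deriv (Eq.symm ?_)
      rw [Finset.sum_add_distrib]
      rw [← Finset.sum_mul, hπ1 s2]
      simp [ite_mul, Finset.sum_ite_eq']
    · have hconst : (fun t : ℝ =>
          ∑ a, (π s2 a + t * (if s2 = sbar ∧ a = abar then (1:ℝ) else 0)) *
            (c s2 a + lam * ω (fun a' => π s2 a' + t *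
              (if s2 = sbar ∧ a' = abar then (1:ℝ) else 0))))
          = fun _ => ∑ a, π s2 a * (c s2 a + lam * ω (π s2)) := by
        funext t
        simp [h]
      rw [if_neg h, hconst]
      exact hasDerivAt_const 0 _
  -- rewrite the goal function
  have hfun : (fun t : ℝ => Vext γ lam p c ω
        (fun s' a => π s' a + t * (if s' = sbar ∧ a = abar then (1 : ℝ) else 0)) s)
      = fun t : ℝ => ∑ s2, Ring.inverse ((1 - γ • P) - t • (γ • Matrix.of fun s1 s2 =>
          if s1 = sbar then p sbar abar s2 else 0)) s s2 *
        (∑ a, (π s2 a + t * (if s2 = sbar ∧ a = abar then (1:ℝ) else 0)) *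
          (c s2 a + lam * ω (fun a' => π s2 a' + t *
            (if s2 = sbar ∧ a' = abar then (1:ℝ) else 0)))) := by
    funext t
    simp only [Vext]
    rw [hAaff t, Matrix.nonsing_inv_eq_ringInverse]
    simp [Matrix.mulVec, dotProduct]
  rw [hfun]
  have hmain := HasDerivAt.fun_sum (fun s2 (_ : s2 ∈ Finset.univ) =>
    (hinvEntry s2).mul (hbderiv s2))
  refine hmain.congr_deriv (Eq.symm ?_)
  -- now the value computation
  have hvev : v = (1 - γ • P)⁻¹ *ᵥ fun s1 => ∑ a, π s1 a * (c s1 a + lam * ω (π s1)) := by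
    rw [hv]
    simp only [Vext]
    have hmat : (Matrix.of fun s1 s2 => ∑ a, π s1 a * p s1 a s2) = P := by
      ext s1 s2
      rw [Matrix.of_apply, hP]
    rw [hmat]
  have hb00 : ∀ s2 : S, (∑ a, (π s2 a + (0:ℝ) * (if s2 = sbar ∧ a = abar then (1:ℝ) else 0)) *
      (c s2 a + lam * ω (fun a' => π s2 a' + (0:ℝ) *
        (if s2 = sbar ∧ a' = abar then (1:ℝ) else 0))))
      = ∑ a, π s2 a * (c s2 a + lam * ω (π s2)) := by
    intro s2; simp
  simp only [hb00, zero_smul, sub_zero, ← Matrix.nonsing_inv_eq_ringInverse]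
  rw [Finset.sum_add_distrib]
  have h2 : ∑ s2, (1 - γ • P)⁻¹ s s2 *
      (if s2 = sbar then c sbar abar + lam * ω (π sbar) + lam * Dω (π sbar) abar else 0)
      = (1 - γ • P)⁻¹ s sbar *
        (c sbar abar + lam * ω (π sbar) + lam * Dω (π sbar) abar) := by
    simp [mul_ite, mul_zero, Finset.sum_ite_eq']
  have h1 : ∑ s2, ((1 - γ • P)⁻¹ * (γ • Matrix.of fun s1 s2 =>
      if s1 = sbar then p sbar abar s2 else 0) * (1 - γ • P)⁻¹) s s2 *
        (∑ a, π s2 a * (c s2 a + lam * ω (π s2)))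
      = (1 - γ • P)⁻¹ s sbar * (γ * ∑ s3, p sbar abar s3 * v s3) := by
    have hmv : ∑ s2, ((1 - γ • P)⁻¹ * (γ • Matrix.of fun s1 s2 =>
        if s1 = sbar then p sbar abar s2 else 0) * (1 - γ • P)⁻¹) s s2 *
          (∑ a, π s2 a * (c s2 a + lam * ω (π s2)))
        = (((1 - γ • P)⁻¹ * (γ • Matrix.of fun s1 s2 =>
            if s1 = sbar then p sbar abar s2 else 0) * (1 - γ • P)⁻¹) *ᵥ
              fun s1 => ∑ a, π s1 a * (c s1 a + lam * ω (π s1))) s := by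
      simp [Matrix.mulVec, dotProduct]
    rw [hmv, ← Matrix.mulVec_mulVec, ← Matrix.mulVec_mulVec, ← hvev]
    have hEv : ((γ • Matrix.of fun s1 s2 => if s1 = sbar then p sbar abar s2 else 0) *ᵥ v)
        = fun s2 => if s2 = sbar then γ * ∑ s3, p sbar abar s3 * v s3 else 0 := by
      funext s2
      by_cases h : s2 = sbar
      · subst h
        simp [Matrix.mulVec, dotProduct, Matrix.smul_apply, Finset.mul_sum, mul_assoc]
      · simp [Matrix.mulVec, dotProduct, Matrix.smul_apply, h]
    rw [hEv]
    simp [Matrix.mulVec, dotProduct, mul_ite, mul_zero, Finset.sum_ite_eq']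
  rw [h1, h2, hq]
  ring
end

section
/- (Policy improvement for Uniform TRPO.) Let $\pi_{k+1}$ satisfy, for each state $s$, the first-order optimality condition of $\min_{\pi\in\Delta_A}\{t_k T_\lambda^{\pi} v_\lambda^{\pi_k}(s) + (1-\lambda t_k)B_\omega(s;\pi,\pi_k)\}$ with $0\le \lambda t_k \le 1$. Then $T_\lambda^{\pi_{k+1}} v_\lambda^{\pi_k} \le v_\lambda^{\pi_k}$ componentwise, and consequently $v_\lambda^{\pi_{k+1}} \le v_\lambda^{\pi_k}$ componentwise. -/
open Finset

/-- Bregman distance generated by `ω` with gradient representative `Dω`. -/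
noncomputable def bregman {A : Type*} [Fintype A] (ω : (A → ℝ) → ℝ)
    (Dω : (A → ℝ) → A → ℝ) (x y : A → ℝ) : ℝ :=
  ω x - ω y - ∑ a, Dω y a * (x a - y a)

/-- Policy improvement for Uniform TRPO: if `π_{k+1}` satisfies the first-order optimality
condition of the statewise proximal problem, then `T_λ^{π_{k+1}} v_λ^{π_k} ≤ v_λ^{π_k}`
componentwise, and consequently `v_λ^{π_{k+1}} ≤ v_λ^{π_k}` componentwise. -/
theorem policy_improvement_uniform_TRPO
    (S A : Type*) [Fintype S] [Fintype A]
    (γ lam tk : ℝ) (hγ0 : 0 < γ) (hγ1 : γ < 1) (htk : 0 < tk)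
    (hlt0 : 0 ≤ lam * tk) (hlt1 : lam * tk ≤ 1)
    (p : S → A → S → ℝ) (hp0 : ∀ s a s', 0 ≤ p s a s')
    (hp1 : ∀ s a, ∑ s', p s a s' = 1)
    (c : S → A → ℝ)
    (ω : (A → ℝ) → ℝ) (Dω : (A → ℝ) → A → ℝ)
    (hB0 : ∀ x ∈ stdSimplex ℝ A, ∀ y ∈ stdSimplex ℝ A, 0 ≤ bregman ω Dω x y)
    (πk πk1 : S → A → ℝ)
    (hπk : ∀ s, πk s ∈ stdSimplex ℝ A) (hπk1 : ∀ s, πk1 s ∈ stdSimplex ℝ A)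
    (v : S → ℝ)
    (hv : ∀ s, v s = (∑ a, πk s a * c s a) + lam * ω (πk s)
        + γ * ∑ a, πk s a * ∑ s', p s a s' * v s')
    (v1 : S → ℝ)
    (hv1 : ∀ s, v1 s = (∑ a, πk1 s a * c s a) + lam * ω (πk1 s)
        + γ * ∑ a, πk1 s a * ∑ s', p s a s' * v1 s')
    (hFOC : ∀ s, ∀ x ∈ stdSimplex ℝ A,
      0 ≤ ∑ a, (tk * (c s a + γ * ∑ s', p s a s' * v s' + lam * Dω (πk1 s) a)
            + (1 - lam * tk) * (Dω (πk1 s) a - Dω (πk s) a)) * (x a - πk1 s a)) :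
    (∀ s, (∑ a, πk1 s a * c s a) + lam * ω (πk1 s)
        + γ * ∑ a, πk1 s a * ∑ s', p s a s' * v s' ≤ v s)
      ∧ (∀ s, v1 s ≤ v s) := by
  have hlam : 0 ≤ lam := by nlinarith
  have part1 : ∀ s, (∑ a, πk1 s a * c s a) + lam * ω (πk1 s)
      + γ * ∑ a, πk1 s a * ∑ s', p s a s' * v s' ≤ v s := by
    intro s
    have hFOCs := hFOC s (πk s) (hπk s)
    have hB1 := hB0 (πk s) (hπk s) (πk1 s) (hπk1 s)
    have hB2 := hB0 (πk1 s) (hπk1 s) (πk s) (hπk s)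
    rw [bregman] at hB1 hB2
    set q : A → ℝ := fun a => c s a + γ * ∑ s', p s a s' * v s' with hq
    set D1 : ℝ := ∑ a, Dω (πk1 s) a * (πk s a - πk1 s a) with hD1
    set D0 : ℝ := ∑ a, Dω (πk s) a * (πk1 s a - πk s a) with hD0
    have key : (∑ a, (tk * (c s a + γ * ∑ s', p s a s' * v s' + lam * Dω (πk1 s) a)
            + (1 - lam * tk) * (Dω (πk1 s) a - Dω (πk s) a)) * (πk s a - πk1 s a))
        = tk * ((∑ a, πk s a * q a) - ∑ a, πk1 s a * q a) + tk * lam * D1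
          + (1 - lam * tk) * (D1 + D0) := by
      rw [hD1, hD0]
      have h : ∀ a : A, (tk * (c s a + γ * ∑ s', p s a s' * v s' + lam * Dω (πk1 s) a)
            + (1 - lam * tk) * (Dω (πk1 s) a - Dω (πk s) a)) * (πk s a - πk1 s a)
          = tk * (πk s a * q a - πk1 s a * q a)
            + tk * lam * (Dω (πk1 s) a * (πk s a - πk1 s a))
            + (1 - lam * tk) * (Dω (πk1 s) a * (πk s a - πk1 s a)
                + Dω (πk s) a * (πk1 s a - πk s a)) := by
        intro a; rw [hq]; ring
      rw [Finset.sum_congr rfl (fun a _ => h a)]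
      simp only [Finset.sum_add_distrib, Finset.sum_sub_distrib, ← Finset.mul_sum]
    rw [key] at hFOCs
    have hd : (1 - lam * tk) * (D1 + D0) ≤ 0 :=
      mul_nonpos_of_nonneg_of_nonpos (by linarith) (by linarith)
    have hDle : tk * lam * D1 ≤ tk * lam * (ω (πk s) - ω (πk1 s)) :=
      mul_le_mul_of_nonneg_left (by linarith) (by positivity)
    have hmain : ∑ a, πk1 s a * q a + lam * ω (πk1 s)
        ≤ ∑ a, πk s a * q a + lam * ω (πk s) := by nlinarith
    have hS1 : ∑ a, πk1 s a * q a = (∑ a, πk1 s a * c s a)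
        + γ * ∑ a, πk1 s a * ∑ s', p s a s' * v s' := by
      rw [Finset.mul_sum, ← Finset.sum_add_distrib]
      exact Finset.sum_congr rfl fun a _ => by rw [hq]; ring
    have hS : ∑ a, πk s a * q a = (∑ a, πk s a * c s a)
        + γ * ∑ a, πk s a * ∑ s', p s a s' * v s' := by
      rw [Finset.mul_sum, ← Finset.sum_add_distrib]
      exact Finset.sum_congr rfl fun a _ => by rw [hq]; ring
    rw [hS1, hS] at hmain
    linarith [hv s]
  refine ⟨part1, ?_⟩
  rcases isEmpty_or_nonempty S with h | h
  · intro s; exact (h.false s).elim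
  · obtain ⟨s0, -, hs0⟩ := Finset.exists_max_image (Finset.univ : Finset S)
      (fun s => v1 s - v s) Finset.univ_nonempty
    set M : ℝ := v1 s0 - v s0 with hM
    have hstep : ∀ s, v1 s - v s ≤ γ * M := by
      intro s
      have h1 := part1 s
      have hinner : ∀ a, (∑ s', p s a s' * v1 s') - ∑ s', p s a s' * v s' ≤ M := by
        intro a
        rw [← Finset.sum_sub_distrib]
        calc ∑ s', (p s a s' * v1 s' - p s a s' * v s')
            = ∑ s', p s a s' * (v1 s' - v s') :=
              Finset.sum_congr rfl fun s' _ => by ring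
          _ ≤ ∑ s', p s a s' * M :=
              Finset.sum_le_sum fun s' _ =>
                mul_le_mul_of_nonneg_left (hs0 s' (Finset.mem_univ s')) (hp0 s a s')
          _ = M := by rw [← Finset.sum_mul, hp1 s a, one_mul]
      have houter : (∑ a, πk1 s a * ∑ s', p s a s' * v1 s')
          - ∑ a, πk1 s a * ∑ s', p s a s' * v s' ≤ M := by
        rw [← Finset.sum_sub_distrib]
        calc ∑ a, (πk1 s a * ∑ s', p s a s' * v1 s' - πk1 s a * ∑ s', p s a s' * v s')
            = ∑ a, πk1 s a * ((∑ s', p s a s' * v1 s') - ∑ s', p s a s' * v s') :=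
              Finset.sum_congr rfl fun a _ => by ring
          _ ≤ ∑ a, πk1 s a * M :=
              Finset.sum_le_sum fun a _ =>
                mul_le_mul_of_nonneg_left (hinner a) ((hπk1 s).1 a)
          _ = M := by rw [← Finset.sum_mul, (hπk1 s).2, one_mul]
      have h2 := hv1 s
      nlinarith [mul_le_mul_of_nonneg_left houter (le_of_lt hγ0)]
    have hM0 : M ≤ 0 := by have := hstep s0; nlinarith
    intro s
    have := hstep s
    nlinarith
end

section
/- (Convergence of regularized Uniform TRPO, telescoping bound.) Suppose for all $k\ge 0$ and a fixed policy $\pi^*$ the componentwise inequality $t_k(I-\gamma P^{\pi^*})(v_\lambda^{\pi_k}-v_\lambda^{\pi^*}) \le (1-\lambda t_k)B_\omega(\pi^*,\pi_k) - B_\omega(\pi^*,\pi_{k+1}) + \lambda t_k(\omega(\pi_k)-\omega(\pi_{k+1})) + \frac{t_k^2 h^2}{2(1-\lambda t_k)}e$ holds with $t_k = \frac{1}{\lambda(k+2)}$, and suppose additionally $v_\lambda^{\pi_{k+1}} \le v_\lambda^{\pi_k}$ componentwise, $B_\omega \ge 0$, and $|\omega(\pi)(s) - \omega(\pi')(s)|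 \le D$ and $B_\omega(\pi^*,\pi_0)(s) \le D$ for all $s,\pi,\pi'$. Then for all $N \ge 1$, $\|v_\lambda^{\pi_N} - v_\lambda^{\pi^*}\|_\infty \le \frac{2\lambda D}{(1-\gamma)(N+1)} + \frac{h^2}{2\lambda(1-\gamma)(N+1)}\sum_{k=1}^{N+1}\frac{1}{k}$. -/
open Finset Matrix

private lemma harmonic_aux : ∀ n : ℕ, ∑ i ∈ Finset.range n, (1:ℝ)/((i:ℝ)+1) = ∑ j ∈ Finset.Icc 1 n, (1:ℝ)/(j:ℝ) := by
  intro n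
  induction n with
  | zero => simp
  | succ m ih =>
    rw [Finset.sum_range_succ, ih, Finset.sum_Icc_succ_top (by omega : 1 ≤ m + 1)]
    push_cast
    ring

/-- Convergence of regularized Uniform TRPO via telescoping: under the fundamental
inequality with step sizes `t_k = 1/(λ(k+2))`, monotone improvement, and bounds `D` on the
regularizer and initial Bregman distance,
`‖v_λ^{π_N} - v_λ^*‖_∞ ≤ 2λD/((1-γ)(N+1)) + h²/(2λ(1-γ)(N+1)) ∑_{k=1}^{N+1} 1/k`. -/
theorem regularized_uniform_TRPO_convergence
    (S : Type*) [Fintype S] [DecidableEq S] [Nonempty S]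
    (γ lam h D : ℝ) (hγ0 : 0 < γ) (hγ1 : γ < 1) (hlam : 0 < lam) (hD : 0 ≤ D)
    (P : Matrix S S ℝ) (hP0 : ∀ s s', 0 ≤ P s s') (hP1 : ∀ s, ∑ s', P s s' = 1)
    (t : ℕ → ℝ) (ht : ∀ k, t k = 1 / (lam * (k + 2)))
    (v : ℕ → S → ℝ) (vstar : S → ℝ)
    (B : ℕ → S → ℝ) (w : ℕ → S → ℝ)
    (hmain : ∀ k s,
      t k * (((1 - γ • P) *ᵥ fun s' => v k s' - vstar s') s)
        ≤ (1 - lam * t k) * B k s - B (k + 1) s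
          + lam * t k * (w k s - w (k + 1) s)
          + t k ^ 2 * h ^ 2 / (2 * (1 - lam * t k)))
    (hmono : ∀ k s, v (k + 1) s ≤ v k s)
    (hopt : ∀ k s, vstar s ≤ v k s)
    (hBnonneg : ∀ k s, 0 ≤ B k s)
    (hw : ∀ k j s, |w k s - w j s| ≤ D)
    (hB0 : ∀ s, B 0 s ≤ D) :
    ∀ N : ℕ, 1 ≤ N → ∀ s,
      |v N s - vstar s| ≤ 2 * lam * D / ((1 - γ) * (N + 1))
        + h ^ 2 / (2 * lam * (1 - γ) * (N + 1)) * ∑ k ∈ Finset.Icc 1 (N + 1), (1 : ℝ) / k := by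
  intro N hN s
  have hγd : (0:ℝ) < 1 - γ := by linarith
  -- Step 1: scaled fundamental inequality
  have hstep : ∀ k s, ((1 - γ • P) *ᵥ fun s' => v k s' - vstar s') s
      ≤ (lam * (((k:ℝ)+1) * B k s) - lam * (((k:ℝ)+1+1) * B (k+1) s))
        + (lam * w k s - lam * w (k+1) s)
        + h^2/(2*lam) * (1/((k:ℝ)+1)) := by
    intro k s
    have h1 := hmain k s
    rw [ht k] at h1
    have hK1 : (0:ℝ) < (k:ℝ) + 1 := by positivity
    have hK2 : (0:ℝ) < (k:ℝ) + 2 := by positivity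
    have hc : (0:ℝ) < lam * ((k:ℝ) + 2) := by positivity
    have e1 : 1 - lam * (1/(lam*((k:ℝ)+2))) = ((k:ℝ)+1)/((k:ℝ)+2) := by
      field_simp
      ring
    rw [e1] at h1
    have h2 := mul_le_mul_of_nonneg_left h1 hc.le
    calc ((1 - γ • P) *ᵥ fun s' => v k s' - vstar s') s
        = lam*((k:ℝ)+2) * (1/(lam*((k:ℝ)+2)) * (((1 - γ • P) *ᵥ fun s' => v k s' - vstar s') s)) := by
          field_simp
      _ ≤ lam*((k:ℝ)+2) * ((((k:ℝ)+1)/((k:ℝ)+2)) * B k s - B (k+1) s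
            + lam * (1/(lam*((k:ℝ)+2))) * (w k s - w (k+1) s)
            + (1/(lam*((k:ℝ)+2)))^2 * h^2 / (2*(((k:ℝ)+1)/((k:ℝ)+2)))) := h2
      _ = (lam * (((k:ℝ)+1) * B k s) - lam * (((k:ℝ)+1+1) * B (k+1) s))
            + (lam * w k s - lam * w (k+1) s)
            + h^2/(2*lam) * (1/((k:ℝ)+1)) := by
          field_simp
          ring
  -- Step 2: telescoping sum
  have hsum : ∀ s, (∑ k ∈ Finset.range (N+1), ((1 - γ • P) *ᵥ fun s' => v k s' - vstar s') s)
      ≤ 2*lam*D + h^2/(2*lam) * ∑ j ∈ Finset.Icc 1 (N+1), (1:ℝ)/j := by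
    intro s
    refine (Finset.sum_le_sum (fun k _ => hstep k s)).trans ?_
    rw [Finset.sum_add_distrib, Finset.sum_add_distrib]
    have T1 : ∑ k ∈ Finset.range (N+1),
        (lam * (((k:ℝ)+1) * B k s) - lam * (((k:ℝ)+1+1) * B (k+1) s)) ≤ lam * D := by
      have e : ∀ k ∈ Finset.range (N+1),
          lam * (((k:ℝ)+1) * B k s) - lam * (((k:ℝ)+1+1) * B (k+1) s)
            = (fun j : ℕ => lam * (((j:ℝ)+1) * B j s)) k
              - (fun j : ℕ => lam * (((j:ℝ)+1) * B j s)) (k+1) := by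
        intro k _; push_cast; ring
      rw [Finset.sum_congr rfl e, Finset.sum_range_sub']
      have h1 := hBnonneg (N+1) s
      have h2 := hB0 s
      have h3 : (0:ℝ) ≤ ((N+1:ℕ):ℝ) + 1 := by positivity
      push_cast
      nlinarith [mul_nonneg (mul_nonneg hlam.le (by positivity : (0:ℝ) ≤ (N:ℝ)+1+1)) h1]
    have T2 : ∑ k ∈ Finset.range (N+1), (lam * w k s - lam * w (k+1) s) ≤ lam * D := by
      rw [Finset.sum_range_sub' (fun j : ℕ => lam * w j s)]
      have := (abs_le.mp (hw 0 (N+1) s)).2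
      nlinarith
    have T3 : ∑ k ∈ Finset.range (N+1), h^2/(2*lam) * (1/((k:ℝ)+1))
        = h^2/(2*lam) * ∑ j ∈ Finset.Icc 1 (N+1), (1:ℝ)/j := by
      rw [← Finset.mul_sum]
      congr 1
      exact harmonic_aux (N+1)
    rw [T3]
    linarith
  -- Step 3: expand the matrix-vector product and aggregate
  have hmv : ∀ f : S → ℝ, ∀ s, ((1 - γ • P) *ᵥ f) s = f s - γ * ∑ s', P s s' * f s' := by
    intro f s
    rw [Matrix.sub_mulVec, Matrix.smul_mulVec]
    simp [Matrix.one_mulVec, Matrix.mulVec, dotProduct, Finset.mul_sum]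
  set x : S → ℝ := fun s => ∑ k ∈ Finset.range (N+1), (v k s - vstar s) with hxdef
  set C : ℝ := 2*lam*D + h^2/(2*lam) * ∑ j ∈ Finset.Icc 1 (N+1), (1:ℝ)/j with hCdef
  have hx : ∀ s, x s - γ * ∑ s', P s s' * x s' ≤ C := by
    intro s
    have h1 := hsum s
    have e : (∑ k ∈ Finset.range (N+1), ((1 - γ • P) *ᵥ fun s' => v k s' - vstar s') s)
        = x s - γ * ∑ s', P s s' * x s' := by
      simp only [hmv]
      rw [Finset.sum_sub_distrib]
      congr 1
      rw [← Finset.mul_sum, Finset.sum_comm]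
      congr 1
      refine Finset.sum_congr rfl fun s' _ => ?_
      rw [← Finset.mul_sum]
    rw [e] at h1
    exact h1
  -- Step 4: max argument
  obtain ⟨s0, -, hs0⟩ := Finset.exists_max_image (Finset.univ : Finset S) x Finset.univ_nonempty
  have hPx : ∑ s', P s0 s' * x s' ≤ x s0 := by
    calc ∑ s', P s0 s' * x s'
        ≤ ∑ s', P s0 s' * x s0 :=
          Finset.sum_le_sum fun s' _ =>
            mul_le_mul_of_nonneg_left (hs0 s' (Finset.mem_univ _)) (hP0 s0 s')
      _ = x s0 := by rw [← Finset.sum_mul, hP1, one_mul]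
  have hM : x s0 ≤ C / (1-γ) := by
    have h1 := hx s0
    rw [le_div_iff₀ hγd]
    nlinarith [hγ0.le]
  have hanti : ∀ s, Antitone (fun k => v k s) :=
    fun s => antitone_nat_of_succ_le fun n => hmono n s
  have hxk : ((N:ℝ)+1) * (v N s - vstar s) ≤ x s := by
    have hle : ∀ k ∈ Finset.range (N+1), v N s - vstar s ≤ v k s - vstar s := by
      intro k hk
      have : v N s ≤ v k s := hanti s (by exact Nat.lt_succ_iff.mp (Finset.mem_range.mp hk))
      linarith
    calc ((N:ℝ)+1) * (v N s - vstar s)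
        = ∑ _k ∈ Finset.range (N+1), (v N s - vstar s) := by
          rw [Finset.sum_const, Finset.card_range]; push_cast; ring
      _ ≤ x s := Finset.sum_le_sum hle
  have hN1 : (0:ℝ) < (N:ℝ) + 1 := by positivity
  have h3 : ((N:ℝ)+1) * (v N s - vstar s) * (1-γ) ≤ C :=
    (le_div_iff₀ hγd).mp (hxk.trans ((hs0 s (Finset.mem_univ s)).trans hM))
  have hfin : v N s - vstar s ≤ C / ((1-γ) * ((N:ℝ)+1)) := by
    rw [le_div_iff₀ (mul_pos hγd hN1)]
    calc (v N s - vstar s) * ((1-γ) * ((N:ℝ)+1))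
        = ((N:ℝ)+1) * (v N s - vstar s) * (1-γ) := by ring
      _ ≤ C := h3
  have habs : |v N s - vstar s| = v N s - vstar s :=
    abs_of_nonneg (sub_nonneg.2 (hopt N s))
  rw [habs]
  refine hfin.trans (le_of_eq ?_)
  rw [hCdef]
  field_simp
end

section
/- (Lower bound on log-probabilities under exponentiated-gradient updates.) Consider the iterates $\pi_{k+1}(a\mid s) \propto \pi_k(a\mid s)\exp(-t_k(q_k(s,a) + \lambda\log\pi_k(a\mid s)))$ with $\pi_0$ uniform, step sizes $t_k = \frac{1}{\lambda(k+2)}$, and $0 \le q_k(s,a) \le Q$ for all $k,s,a$. Then for all $k \ge 1$ and all $(s,a)$: $\log\pi_k(a\mid s) \ge -\log A - (Q/\lambda + \log A)(1 + \log k)$. -/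
open Finset

lemma sum_rpow_le_card_rpow {ι : Type*} [Fintype ι] [Nonempty ι] (f : ι → ℝ)
    (hf : ∀ i, 0 ≤ f i) (hsum : ∑ i, f i = 1) {θ : ℝ} (hθ0 : 0 ≤ θ) (hθ1 : θ ≤ 1) :
    ∑ i, f i ^ θ ≤ (Fintype.card ι : ℝ) ^ (1 - θ) := by
  set n : ℝ := (Fintype.card ι : ℝ) with hn
  have hnpos : 0 < n := by
    have := Fintype.card_pos (α := ι); positivity
  have key := (Real.concaveOn_rpow hθ0 hθ1).le_map_sum (t := Finset.univ)
    (w := fun _ : ι => 1 / n) (p := fun i => n * f i)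
    (fun i _ => by positivity)
    (by simp [Finset.card_univ]; exact mul_inv_cancel₀ hnpos.ne')
    (fun i _ => Set.mem_Ici.mpr (by have := hf i; positivity))
  simp only [smul_eq_mul] at key
  have hR : ∑ i : ι, (1 / n) * (n * f i) = 1 := by
    rw [← Finset.mul_sum, ← Finset.mul_sum, hsum]
    field_simp
  have hL : ∑ i : ι, (1 / n) * (n * f i) ^ θ = n ^ (θ - 1) * ∑ i, f i ^ θ := by
    rw [Finset.mul_sum]
    congr 1; ext i
    rw [Real.mul_rpow hnpos.le (hf i)]
    rw [show θ - 1 = θ + (-1) by ring, Real.rpow_add hnpos, Real.rpow_neg_one]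
    ring
  rw [hR, Real.one_rpow, hL] at key
  calc ∑ i, f i ^ θ = n ^ (1 - θ) * (n ^ (θ - 1) * ∑ i, f i ^ θ) := by
        rw [← mul_assoc, ← Real.rpow_add hnpos]; simp
    _ ≤ n ^ (1 - θ) * 1 := by
        have : (0:ℝ) ≤ n ^ (1 - θ) := by positivity
        nlinarith
    _ = n ^ (1 - θ) := mul_one _

lemma sum_inv_add_two_le (k : ℕ) (hk : 1 ≤ k) :
    ∑ i ∈ Finset.range k, (1 : ℝ) / (i + 2) ≤ 1 + Real.log k := by
  have main : ∀ m : ℕ, ∑ i ∈ Finset.range m, (1 : ℝ) / (i + 2) ≤ Real.log (m + 1) := by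
    intro m
    induction m with
    | zero => simp
    | succ m ih =>
      rw [Finset.sum_range_succ]
      have h1 : (1 : ℝ) / (m + 2) ≤ Real.log (m + 2) - Real.log (m + 1) := by
        have hx : (0:ℝ) < ((m:ℝ) + 1) / ((m:ℝ) + 2) := by positivity
        have := Real.log_le_sub_one_of_pos hx
        rw [Real.log_div (by positivity) (by positivity)] at this
        have h2 : ((m:ℝ) + 1) / ((m:ℝ) + 2) - 1 = -(1 / ((m:ℝ) + 2)) := by
          field_simp
          norm_num
        linarith
      push_cast
      push_cast at ih
      rw [show ((m:ℝ) + 1 + 1) = ((m:ℝ) + 2) by ring]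
      linarith
  have h2 := main k
  have h3 : Real.log (k + 1) ≤ 1 + Real.log k := by
    have hk1 : (1:ℝ) ≤ (k:ℝ) := by exact_mod_cast hk
    have : (k:ℝ) + 1 ≤ 2 * k := by linarith
    calc Real.log ((k:ℝ) + 1) ≤ Real.log (2 * k) :=
          Real.log_le_log (by positivity) this
      _ = Real.log 2 + Real.log k := Real.log_mul two_ne_zero (by positivity)
      _ ≤ 1 + Real.log k := by
          have := Real.log_two_lt_d9
          linarith
  linarith

/-- Lower bound on log-probabilities under exponentiated-gradient updates with
`t_k = 1/(λ(k+2))`, uniform initialization, and bounded nonnegative `q`-values: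
`log π_k(a|s) ≥ -log A - (Q/λ + log A)(1 + log k)` for all `k ≥ 1`. -/
theorem log_prob_lower_bound_exponentiated_updates
    (S A : Type*) [Fintype S] [Fintype A] [Nonempty A]
    (lam Q : ℝ) (hlam : 0 < lam) (hQ : 0 ≤ Q)
    (t : ℕ → ℝ) (ht : ∀ k, t k = 1 / (lam * (k + 2)))
    (q : ℕ → S → A → ℝ) (hq0 : ∀ k s a, 0 ≤ q k s a) (hqQ : ∀ k s a, q k s a ≤ Q)
    (π : ℕ → S → A → ℝ)
    (hπ0 : ∀ s a, π 0 s a = 1 / (Fintype.card A : ℝ))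
    (hupd : ∀ k s a, π (k + 1) s a =
      π k s a * Real.exp (-(t k) * (q k s a + lam * Real.log (π k s a)))
        / ∑ a', π k s a' * Real.exp (-(t k) * (q k s a' + lam * Real.log (π k s a')))) :
    ∀ k : ℕ, 1 ≤ k → ∀ s a,
      -Real.log (Fintype.card A)
          - (Q / lam + Real.log (Fintype.card A)) * (1 + Real.log k)
        ≤ Real.log (π k s a) := by
  set N : ℝ := (Fintype.card A : ℝ) with hN
  have hN1 : (1:ℝ) ≤ N := by
    rw [hN]; exact_mod_cast Fintype.card_pos
  have hNpos : (0:ℝ) < N := lt_of_lt_of_le one_pos hN1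
  have hlogN : 0 ≤ Real.log N := Real.log_nonneg hN1
  have htpos : ∀ k : ℕ, 0 < t k := by
    intro k; rw [ht]; positivity
  -- invariant
  have inv : ∀ k s, (∀ a, 0 < π k s a) ∧ (∑ a, π k s a = 1) := by
    intro k
    induction k with
    | zero =>
      intro s
      constructor
      · intro a; rw [hπ0]; positivity
      · simp only [hπ0, Finset.sum_const, Finset.card_univ, nsmul_eq_mul]
        field_simp
        exact hN.symm
    | succ k ih =>
      intro s
      obtain ⟨hpos, hsum⟩ := ih s
      have hZpos : 0 < ∑ a', π k s a' *
          Real.exp (-(t k) * (q k s a' + lam * Real.log (π k s a'))) := by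
        apply Finset.sum_pos
        · intro a _; exact mul_pos (hpos a) (Real.exp_pos _)
        · exact Finset.univ_nonempty
      constructor
      · intro a
        rw [hupd]
        exact div_pos (mul_pos (hpos a) (Real.exp_pos _)) hZpos
      · simp_rw [hupd]
        rw [← Finset.sum_div, div_self (ne_of_gt hZpos)]
  -- upper bound π ≤ 1
  have hle1 : ∀ k s a, π k s a ≤ 1 := by
    intro k s a
    obtain ⟨hpos, hsum⟩ := inv k s
    calc π k s a ≤ ∑ a', π k s a' :=
          Finset.single_le_sum (fun a' _ => (hpos a').le) (Finset.mem_univ a)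
      _ = 1 := hsum
  -- one-step bound
  have step : ∀ k s a,
      Real.log (π k s a) - (Q / lam + Real.log N) * (1 / (k + 2))
        ≤ Real.log (π (k + 1) s a) := by
    intro k s a
    obtain ⟨hpos, hsum⟩ := inv k s
    set Z := ∑ a', π k s a' * Real.exp (-(t k) * (q k s a' + lam * Real.log (π k s a'))) with hZ
    have hZpos : 0 < Z := by
      apply Finset.sum_pos
      · intro a' _; exact mul_pos (hpos a') (Real.exp_pos _)
      · exact Finset.univ_nonempty
    have hε0 : 0 < lam * t k := mul_pos hlam (htpos k)
    have hε1 : lam * t k ≤ 1 := by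
      rw [ht]
      rw [show lam * (1 / (lam * ((k:ℝ) + 2))) = 1 / ((k:ℝ) + 2) by field_simp]
      rw [div_le_one (by positivity)]
      linarith [Nat.cast_nonneg (α := ℝ) k]
    -- bound on Z
    have hZle : Z ≤ N ^ (lam * t k) := by
      have hterm : ∀ a', π k s a' *
          Real.exp (-(t k) * (q k s a' + lam * Real.log (π k s a')))
            ≤ π k s a' ^ (1 - lam * t k) := by
        intro a'
        have hp := hpos a'
        have h1 : Real.exp (-(t k) * (q k s a' + lam * Real.log (π k s a')))
            = Real.exp (-(t k) * q k s a') * π k s a' ^ (-(lam * t k)) := by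
          rw [Real.rpow_def_of_pos hp, ← Real.exp_add]
          ring_nf
        rw [h1]
        have h2 : Real.exp (-(t k) * q k s a') ≤ 1 := by
          rw [Real.exp_le_one_iff]
          have := hq0 k s a'
          have := (htpos k).le
          nlinarith
        calc π k s a' * (Real.exp (-(t k) * q k s a') * π k s a' ^ (-(lam * t k)))
            ≤ π k s a' * (1 * π k s a' ^ (-(lam * t k))) := by
              apply mul_le_mul_of_nonneg_left _ hp.le
              apply mul_le_mul_of_nonneg_right h2 (Real.rpow_nonneg hp.le _)
          _ = π k s a' ^ (1 - lam * t k) := by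
              rw [one_mul, show (1:ℝ) - lam * t k = 1 + (-(lam * t k)) by ring,
                Real.rpow_add hp, Real.rpow_one]
      calc Z ≤ ∑ a', π k s a' ^ (1 - lam * t k) :=
            Finset.sum_le_sum (fun a' _ => hterm a')
        _ ≤ N ^ (1 - (1 - lam * t k)) :=
            sum_rpow_le_card_rpow _ (fun a' => (hpos a').le) hsum
              (by linarith) (by linarith)
        _ = N ^ (lam * t k) := by ring_nf
    have hlogZ : Real.log Z ≤ lam * t k * Real.log N := by
      calc Real.log Z ≤ Real.log (N ^ (lam * t k)) :=
            Real.log_le_log hZpos hZle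
        _ = lam * t k * Real.log N := Real.log_rpow hNpos _
    -- expand log π(k+1)
    have hexpand : Real.log (π (k + 1) s a)
        = Real.log (π k s a) + (-(t k) * (q k s a + lam * Real.log (π k s a)))
          - Real.log Z := by
      rw [hupd k s a,
        Real.log_div (ne_of_gt (mul_pos (hpos a) (Real.exp_pos _))) (ne_of_gt hZpos),
        Real.log_mul (ne_of_gt (hpos a)) (Real.exp_ne_zero _), Real.log_exp]
    rw [hexpand]
    have hlogle0 : Real.log (π k s a) ≤ 0 := Real.log_nonpos (hpos a).le (hle1 k s a)
    have htk : t k * lam = 1 / ((k:ℝ) + 2) := by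
      rw [ht]; field_simp
    have htQ : t k * q k s a ≤ (Q / lam) * (1 / ((k:ℝ) + 2)) := by
      have h1 : t k * q k s a ≤ t k * Q :=
        mul_le_mul_of_nonneg_left (hqQ k s a) (htpos k).le
      have h2 : t k * Q = Q / lam * (1 / ((k:ℝ) + 2)) := by
        rw [ht]; field_simp
      linarith
    have hA : -(t k) * (q k s a + lam * Real.log (π k s a))
        = -(t k * q k s a) - (t k * lam) * Real.log (π k s a) := by ring
    have hB : 0 ≤ -((t k * lam) * Real.log (π k s a)) := by
      rw [htk]
      have h3 : (0:ℝ) < 1 / ((k:ℝ) + 2) := by positivity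
      nlinarith
    have hlogZ' : Real.log Z ≤ (1 / ((k:ℝ) + 2)) * Real.log N := by
      rw [← htk, mul_comm (t k) lam]; exact hlogZ
    have hD : (Q / lam + Real.log N) * (1 / ((k:ℝ) + 2))
        = Q / lam * (1 / ((k:ℝ) + 2)) + 1 / ((k:ℝ) + 2) * Real.log N := by ring
    linarith [hA, hB, htQ, hlogZ', hD]
  -- unroll
  have unroll : ∀ k s a,
      -Real.log N - (Q / lam + Real.log N) * (∑ i ∈ Finset.range k, 1 / ((i:ℝ) + 2))
        ≤ Real.log (π k s a) := by
    intro k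
    induction k with
    | zero =>
      intro s a
      rw [hπ0, one_div, Real.log_inv]
      simp
    | succ k ih =>
      intro s a
      have h1 := step k s a
      have h2 := ih s a
      rw [Finset.sum_range_succ]
      have hE : (Q / lam + Real.log N)
            * (∑ i ∈ Finset.range k, 1 / ((i:ℝ) + 2) + 1 / ((k:ℝ) + 2))
          = (Q / lam + Real.log N) * (∑ i ∈ Finset.range k, 1 / ((i:ℝ) + 2))
            + (Q / lam + Real.log N) * (1 / ((k:ℝ) + 2)) := by ring
      linarith
  intro k hk s a
  have h1 := unroll k s a
  have h2 := sum_inv_add_two_le k hk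
  have hCnn : 0 ≤ Q / lam + Real.log N := by positivity
  have h3 := mul_le_mul_of_nonneg_left h2 hCnn

  linarith
end
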